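/- Let $X$ be a birack (operations $a^b$, $a_b$ satisfying the Yang–Baxter identities) that is moreover a biquandle, i.e. $a^a = a_a$ for all $a \in X$. In the birack chain complex $(C_*, \partial)$, let $D_n \subseteq C_n$ be the subgroup generated by degenerate cubes, i.e. words $a_1 \cdots a_n$ with $a_i = a_{i+1}$ for some $1 \leq i \leq n-1$. Then $\partial(D_n) \subseteq D_{n-1}$, so the degenerate cubes form a subcomplex. -/

import Mathlib

/-- Face `∂_i^-`: delete the `i`-th letter of the word. -/
def faceMinus {X : Type*} {n : ℕ} (w : Fin (n + 1) → X) (i : Fin (n + 1)) :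
    Fin n → X := fun k => w (i.succAbove k)

/-- Face `∂_i^+`: delete the `i`-th letter, acting by `(·)^{a_i}` before position `i`
and by `(·)_{a_i}` after position `i`. -/
def facePlus {X : Type*} (up dn : X → X → X) {n : ℕ} (w : Fin (n + 1) → X)
    (i : Fin (n + 1)) : Fin n → X :=
  fun k => if i.succAbove k < i then up (w (i.succAbove k)) (w i)
           else dn (w (i.succAbove k)) (w i)

/-- The birack boundary map `∂ = ∑ᵢ (-1)ⁱ (∂_i^- - ∂_i^+)`. -/
noncomputable def birackBoundary {X : Type*} (up dn : X → X → X) (n : ℕ) :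
    FreeAbelianGroup (Fin (n + 1) → X) →+ FreeAbelianGroup (Fin n → X) :=
  FreeAbelianGroup.lift fun w =>
    ∑ i : Fin (n + 1), ((-1 : ℤ) ^ ((i : ℕ) + 1)) •
      (FreeAbelianGroup.of (faceMinus w i) - FreeAbelianGroup.of (facePlus up dn w i))

/-- A word is degenerate if two consecutive letters coincide. -/
def IsDegenerate {X : Type*} {n : ℕ} (w : Fin n → X) : Prop :=
  ∃ k : Fin n, ∃ h : (k : ℕ) + 1 < n, w k = w ⟨(k : ℕ) + 1, h⟩

/-- The subgroup of chains generated by degenerate cubes. -/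
def degenSubgroup (X : Type*) (n : ℕ) : AddSubgroup (FreeAbelianGroup (Fin n → X)) :=
  AddSubgroup.closure {x | ∃ w : Fin n → X, IsDegenerate w ∧ x = FreeAbelianGroup.of w}

lemma succAbove_coe {n : ℕ} (i : Fin (n+1)) (j : Fin n) :
    ((i.succAbove j) : ℕ) = if (j:ℕ) < (i:ℕ) then (j:ℕ) else (j:ℕ)+1 := by
  simp [Fin.succAbove, Fin.lt_def]; split <;> simp

lemma deg_mem {X : Type*} {n : ℕ} (w : Fin n → X) (h : IsDegenerate w) :
    FreeAbelianGroup.of w ∈ degenSubgroup X n :=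
  AddSubgroup.subset_closure ⟨w, h, rfl⟩

/-- For a biquandle (a birack with `a^a = a_a`), the boundary map sends degenerate
chains to degenerate chains, so degenerate cubes form a subcomplex. -/
theorem degenerate_subcomplex {X : Type*} (up dn : X → X → X)
    (hYB1 : ∀ a b c : X, up (up a b) (dn c b) = up (up a c) (up b c))
    (hYB2 : ∀ a b c : X, dn (dn c b) (up a b) = dn (dn c a) (dn b a))
    (hYB3 : ∀ a b c : X, up (dn b a) (dn c a) = dn (up b c) (up a c))
    (hBQ : ∀ a : X, up a a = dn a a) :
    ∀ n : ℕ, ∀ x ∈ degenSubgroup X (n + 1),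
      birackBoundary up dn n x ∈ degenSubgroup X n := by
  intro n x hx
  induction hx using AddSubgroup.closure_induction with
  | mem x hx =>
    obtain ⟨w, ⟨k, hk, hww⟩, rfl⟩ := hx
    rw [birackBoundary, FreeAbelianGroup.lift_apply_of]
    set k1 : Fin (n+1) := ⟨(k:ℕ)+1, hk⟩ with hk1
    have hk1v : (k1 : ℕ) = (k:ℕ)+1 := rfl
    set T : Fin (n+1) → FreeAbelianGroup (Fin n → X) := fun i =>
      ((-1 : ℤ) ^ ((i : ℕ) + 1)) •
        (FreeAbelianGroup.of (faceMinus w i) - FreeAbelianGroup.of (facePlus up dn w i))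
      with hT
    show ∑ i, T i ∈ _
    have hne : k ≠ k1 := by
      intro h; apply absurd (congrArg (Fin.val) h); simp [hk1v]
    rw [← Finset.sum_add_sum_compl ({k, k1} : Finset (Fin (n+1))) T]
    apply add_mem
    · -- the two special terms cancel
      rw [Finset.sum_pair hne]
      have hμ : faceMinus w k = faceMinus w k1 := by
        funext j
        rcases lt_trichotomy (j:ℕ) (k:ℕ) with h | h | h
        · have e1 : k.succAbove j = k1.succAbove j := by
            apply Fin.ext; rw [succAbove_coe, succAbove_coe, hk1v]
            split_ifs <;> omega
          simp [faceMinus, e1]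
        · have e1 : k.succAbove j = k1 := by
            apply Fin.ext; rw [succAbove_coe, hk1v]; split_ifs <;> omega
          have e2 : k1.succAbove j = k := by
            apply Fin.ext; rw [succAbove_coe]
            have : (k1:ℕ) = (k:ℕ)+1 := hk1v
            split_ifs <;> omega
          simp [faceMinus, e1, e2, hww]
        · have e1 : k.succAbove j = k1.succAbove j := by
            apply Fin.ext; rw [succAbove_coe, succAbove_coe, hk1v]
            split_ifs <;> omega
          simp [faceMinus, e1]
      have hπ : facePlus up dn w k = facePlus up dn w k1 := by
        funext j
        have hk1v' : (k1:ℕ) = (k:ℕ)+1 := hk1v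
        rcases lt_trichotomy (j:ℕ) (k:ℕ) with h | h | h
        · have e1 : (k.succAbove j : ℕ) = (j:ℕ) := by
            rw [succAbove_coe]; split_ifs <;> omega
          have e2 : (k1.succAbove j : ℕ) = (j:ℕ) := by
            rw [succAbove_coe]; split_ifs <;> omega
          have e12 : k.succAbove j = k1.succAbove j := Fin.ext (by rw [e1, e2])
          have c1 : k.succAbove j < k := by rw [Fin.lt_def, e1]; exact h
          have c2 : k1.succAbove j < k1 := by rw [Fin.lt_def, e2]; omega
          simp only [facePlus]
          rw [if_pos c1, if_pos c2, e12, hww]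
        · have e1 : k.succAbove j = k1 := by
            apply Fin.ext; rw [succAbove_coe]; split_ifs <;> omega
          have e2 : k1.succAbove j = k := by
            apply Fin.ext; rw [succAbove_coe]; split_ifs <;> omega
          have c1 : ¬ k.succAbove j < k := by
            rw [e1, Fin.lt_def]; omega
          have c2 : k1.succAbove j < k1 := by
            rw [e2, Fin.lt_def]; omega
          simp only [facePlus]
          rw [if_neg c1, if_pos c2, e1, e2, ← hww]
          exact (hBQ (w k)).symm
        · have e1 : (k.succAbove j : ℕ) = (j:ℕ)+1 := by
            rw [succAbove_coe]; split_ifs <;> omega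
          have e2 : (k1.succAbove j : ℕ) = (j:ℕ)+1 := by
            rw [succAbove_coe]; split_ifs <;> omega
          have e12 : k.succAbove j = k1.succAbove j := Fin.ext (by rw [e1, e2])
          have c1 : ¬ k.succAbove j < k := by rw [Fin.lt_def, e1]; omega
          have c2 : ¬ k1.succAbove j < k1 := by rw [Fin.lt_def, e2]; omega
          simp only [facePlus]
          rw [if_neg c1, if_neg c2, e12, hww]
      have hcancel : T k + T k1 = 0 := by
        rw [hT]
        simp only [hμ, hπ, hk1v]
        rw [← add_smul]
        have : ((-1:ℤ) ^ ((k:ℕ)+1) + (-1:ℤ) ^ ((k:ℕ)+1+1)) = 0 := by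
          rw [pow_succ ((-1:ℤ)) ((k:ℕ)+1)]; ring
        rw [this, zero_smul]
      rw [hcancel]
      exact zero_mem _
    · -- all other terms are degenerate
      apply sum_mem
      intro i hi
      have hik : i ≠ k ∧ i ≠ k1 := by
        simpa [Finset.mem_compl, Finset.mem_insert, Finset.mem_singleton, not_or] using hi
      have hiv : (i:ℕ) < (k:ℕ) ∨ (k:ℕ)+1 < (i:ℕ) := by
        have h1 : (i:ℕ) ≠ (k:ℕ) := fun h => hik.1 (Fin.ext h)
        have h2 : (i:ℕ) ≠ (k:ℕ)+1 := fun h => hik.2 (Fin.ext h)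
        omega
      have hile : (i:ℕ) ≤ n := Nat.lt_succ_iff.mp i.isLt
      rw [hT]
      apply zsmul_mem
      rcases hiv with hlt | hgt
      · have s1 : ∀ j : Fin n, (j:ℕ)+1 = (k:ℕ) → i.succAbove j = k := by
          intro j hj; apply Fin.ext; rw [succAbove_coe]; split_ifs <;> omega
        have s2 : ∀ j : Fin n, (j:ℕ) = (k:ℕ) → i.succAbove j = k1 := by
          intro j hj; apply Fin.ext; rw [succAbove_coe]; split_ifs <;> omega
        have mainM : ∀ j j' : Fin n, (j:ℕ)+1 = (k:ℕ) → (j':ℕ) = (k:ℕ) →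
            faceMinus w i j = faceMinus w i j' := by
          intro j j' hj hj'
          show w _ = w _
          rw [s1 j hj, s2 j' hj', hww]
        have mainP : ∀ j j' : Fin n, (j:ℕ)+1 = (k:ℕ) → (j':ℕ) = (k:ℕ) →
            facePlus up dn w i j = facePlus up dn w i j' := by
          intro j j' hj hj'
          have c1 : ¬ i.succAbove j < i := by rw [s1 j hj, Fin.lt_def]; omega
          have c2 : ¬ i.succAbove j' < i := by rw [s2 j' hj', Fin.lt_def]; omega
          simp only [facePlus]
          rw [if_neg c1, if_neg c2, s1 j hj, s2 j' hj', hww]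
        exact sub_mem
          (deg_mem _ ⟨⟨(k:ℕ)-1, by omega⟩, by show (k:ℕ)-1+1 < n; omega,
            mainM _ _ (by show (k:ℕ)-1+1 = (k:ℕ); omega) (by show (k:ℕ)-1+1 = (k:ℕ); omega)⟩)
          (deg_mem _ ⟨⟨(k:ℕ)-1, by omega⟩, by show (k:ℕ)-1+1 < n; omega,
            mainP _ _ (by show (k:ℕ)-1+1 = (k:ℕ); omega) (by show (k:ℕ)-1+1 = (k:ℕ); omega)⟩)
      · have s1 : ∀ j : Fin n, (j:ℕ) = (k:ℕ) → i.succAbove j = k := by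
          intro j hj; apply Fin.ext; rw [succAbove_coe]; split_ifs <;> omega
        have s2 : ∀ j : Fin n, (j:ℕ) = (k:ℕ)+1 → i.succAbove j = k1 := by
          intro j hj; apply Fin.ext; rw [succAbove_coe]; split_ifs <;> omega
        have mainM : ∀ j j' : Fin n, (j:ℕ) = (k:ℕ) → (j':ℕ) = (k:ℕ)+1 →
            faceMinus w i j = faceMinus w i j' := by
          intro j j' hj hj'
          show w _ = w _
          rw [s1 j hj, s2 j' hj', hww]
        have mainP : ∀ j j' : Fin n, (j:ℕ) = (k:ℕ) → (j':ℕ) = (k:ℕ)+1 →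
            facePlus up dn w i j = facePlus up dn w i j' := by
          intro j j' hj hj'
          have c1 : i.succAbove j < i := by rw [s1 j hj, Fin.lt_def]; omega
          have c2 : i.succAbove j' < i := by rw [s2 j' hj', Fin.lt_def]; omega
          simp only [facePlus]
          rw [if_pos c1, if_pos c2, s1 j hj, s2 j' hj', hww]
        exact sub_mem
          (deg_mem _ ⟨⟨(k:ℕ), by omega⟩, by show (k:ℕ)+1 < n; omega,
            mainM _ _ rfl rfl⟩)
          (deg_mem _ ⟨⟨(k:ℕ), by omega⟩, by show (k:ℕ)+1 < n; omega,
            mainP _ _ rfl rfl⟩)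
  | zero => simpa using zero_mem _
  | add x y _ _ hx hy => rw [map_add]; exact add_mem hx hy
  | neg x _ hx => rw [map_neg]; exact neg_mem hx
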